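/- Let 1 + 2/n < p < 1 + 2/(n-1) and suppose w ∈ H^{1/2}(ℝ^n) satisfies the Pohozaev-type identity Q(w) = 0, where Q(w) = (1/2)∫ |ξ|²/√(1+|ξ|²) |ŵ(ξ)|² dξ − (n(p-1)/(2(p+1)))‖w‖^{p+1}_{L^{p+1}}. Then E_s(w) ≥ ((np − n − 2)/(2n(p-1))) ‖w‖²_{H^{1/2}(ℝ^n)}, and in particular E_s(w) > 0. -/

import Mathlib

open MeasureTheory Real FourierTransform
open scoped ENNReal

noncomputable section

/-- Euclidean space ℝ^n. -/
abbrev Rn (n : ℕ) := EuclideanSpace ℝ (Fin n)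

/-- Inhomogeneous Sobolev norm `‖u‖_{H^s} = (∫ (1+|ξ|²)^s |û(ξ)|² dξ)^{1/2}`. -/
def HsNorm (n : ℕ) (s : ℝ) (u : Rn n → ℂ) : ℝ :=
  (∫ ξ : Rn n, (1 + ‖ξ‖ ^ 2) ^ s * ‖𝓕 u ξ‖ ^ 2) ^ ((1 : ℝ) / 2)

/-- Homogeneous Sobolev norm `‖u‖_{Ḣ^s} = (∫ |ξ|^{2s} |û(ξ)|² dξ)^{1/2}`. -/
def HdotNorm (n : ℕ) (s : ℝ) (u : Rn n → ℂ) : ℝ :=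
  (∫ ξ : Rn n, ‖ξ‖ ^ (2 * s) * ‖𝓕 u ξ‖ ^ 2) ^ ((1 : ℝ) / 2)

/-- Lebesgue norm `‖u‖_{L^p} = (∫ |u|^p)^{1/p}` (real exponent). -/
def LpNorm (n : ℕ) (p : ℝ) (u : Rn n → ℂ) : ℝ :=
  (∫ x : Rn n, ‖u x‖ ^ p) ^ (1 / p)

/-- `u` is radially symmetric. -/
def IsRadial {n : ℕ} (u : Rn n → ℂ) : Prop :=
  ∀ x y : Rn n, ‖x‖ = ‖y‖ → u x = u y

/-- Membership in the inhomogeneous Sobolev space `H^s(ℝ^n)`. -/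
def InHs (n : ℕ) (s : ℝ) (u : Rn n → ℂ) : Prop :=
  MemLp u 2 (volume : Measure (Rn n)) ∧
    Integrable (fun ξ : Rn n => (1 + ‖ξ‖ ^ 2) ^ s * ‖𝓕 u ξ‖ ^ 2)

/-- Semirelativistic NLS energy. -/
def Es (n : ℕ) (p : ℝ) (u : Rn n → ℂ) : ℝ :=
  (1 / 2) * (HsNorm n (1 / 2) u) ^ 2 - (1 / (p + 1)) * (LpNorm n (p + 1) u) ^ (p + 1)

/-- Pohozaev-type functional for sNLS. -/
def Qfun (n : ℕ) (p : ℝ) (u : Rn n → ℂ) : ℝ :=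
  (1 / 2) * (∫ ξ : Rn n, ‖ξ‖ ^ 2 / Real.sqrt (1 + ‖ξ‖ ^ 2) * ‖𝓕 u ξ‖ ^ 2) -
    ((n : ℝ) * (p - 1) / (2 * (p + 1))) * (LpNorm n (p + 1) u) ^ (p + 1)

/-- On the Pohozaev constraint `Q(w) = 0`, the sNLS energy is coercive and positive. -/
theorem Es_positive_on_Pohozaev (n : ℕ) (p : ℝ) (hn : 1 ≤ n)
    (hp1 : 1 + 2 / (n : ℝ) < p) (hp2 : p < 1 + 2 / ((n : ℝ) - 1))
    (w : Rn n → ℂ) (hw : InHs n (1 / 2) w)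
    (hLp : Integrable (fun x : Rn n => ‖w x‖ ^ (p + 1)))
    (hpos : 0 < HsNorm n (1 / 2) w)
    (hQ : Qfun n p w = 0) :
    (((n : ℝ) * p - n - 2) / (2 * (n : ℝ) * (p - 1))) * (HsNorm n (1 / 2) w) ^ 2 ≤
        Es n p w ∧ 0 < Es n p w := by

  obtain ⟨hw2, hint⟩ := hw
  have hn0 : (0:ℝ) < n := by exact_mod_cast hn
  have hp1' : (0:ℝ) < p - 1 := by
    have h2n : (0:ℝ) < 2 / n := by positivity
    linarith
  have hk : 2 < (n:ℝ) * (p - 1) := by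
    have h : 2 / (n:ℝ) < p - 1 := by linarith
    have := (div_lt_iff₀ hn0).mp h
    linarith
  have hk0 : (0:ℝ) < (n:ℝ) * (p - 1) := by linarith
  set H2 : ℝ := ∫ ξ : Rn n, (1 + ‖ξ‖ ^ 2) ^ ((1:ℝ)/2) * ‖𝓕 w ξ‖ ^ 2 with hH2def
  set I : ℝ := ∫ ξ : Rn n, ‖ξ‖ ^ 2 / Real.sqrt (1 + ‖ξ‖ ^ 2) * ‖𝓕 w ξ‖ ^ 2 with hIdef
  set L : ℝ := (LpNorm n (p + 1) w) ^ (p + 1) with hLdef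
  have hH2nn : 0 ≤ H2 := by
    apply integral_nonneg
    intro ξ
    positivity
  have hsq : (HsNorm n (1 / 2) w) ^ 2 = H2 := by
    have : HsNorm n (1 / 2) w = H2 ^ ((1:ℝ)/2) := rfl
    rw [this, ← Real.rpow_natCast (H2 ^ ((1:ℝ)/2)) 2, ← Real.rpow_mul hH2nn]
    norm_num
  have hIle : I ≤ H2 := by
    apply integral_mono_of_nonneg (ae_of_all _ ?_) hint (ae_of_all _ ?_)
    · intro ξ
      have h1 : (0:ℝ) < 1 + ‖ξ‖ ^ 2 := by positivity
      have := Real.sqrt_pos.mpr h1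
      positivity
    · intro ξ
      have h1 : (0:ℝ) < 1 + ‖ξ‖ ^ 2 := by positivity
      have hs : (0:ℝ) < Real.sqrt (1 + ‖ξ‖ ^ 2) := Real.sqrt_pos.mpr h1
      have hbd : ‖ξ‖ ^ 2 / Real.sqrt (1 + ‖ξ‖ ^ 2) ≤ (1 + ‖ξ‖ ^ 2) ^ ((1:ℝ)/2) := by
        rw [← Real.sqrt_eq_rpow, div_le_iff₀ hs, Real.mul_self_sqrt h1.le]
        linarith [sq_nonneg ‖ξ‖]
      exact mul_le_mul_of_nonneg_right hbd (by positivity)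
  have hQ' : (1/2) * I = ((n:ℝ) * (p - 1) / (2 * (p + 1))) * L := by
    have := hQ
    unfold Qfun at this
    rw [← hIdef, ← hLdef] at this
    linarith
  have hp1pos : (0:ℝ) < p + 1 := by linarith
  have hrel : (1/(p+1)) * L = I / ((n:ℝ) * (p - 1)) := by
    rw [eq_div_iff hk0.ne']
    field_simp at hQ' ⊢
    linarith [hQ']
  have hEs : Es n p w = (1/2) * H2 - I / ((n:ℝ) * (p - 1)) := by
    unfold Es
    rw [hsq, ← hLdef, hrel]
  have hcoeff : (((n : ℝ) * p - n - 2) / (2 * (n : ℝ) * (p - 1))) * H2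
      = (1/2) * H2 - H2 / ((n:ℝ) * (p - 1)) := by
    field_simp
  have hdivle : I / ((n:ℝ) * (p - 1)) ≤ H2 / ((n:ℝ) * (p - 1)) := by gcongr
  have hH2pos : 0 < H2 := by rw [← hsq]; positivity
  constructor
  · rw [hEs, hsq, hcoeff]; linarith
  · rw [hEs]
    have hc : 0 < (((n : ℝ) * p - n - 2) / (2 * (n : ℝ) * (p - 1))) := by
      apply div_pos <;> nlinarith
    nlinarith [mul_pos hc hH2pos, hcoeff]
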